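/- Let x ∈ C, λ > 0, and let y ∈ C be the minimizer over cl C of u ↦ ⟨∇f(x), u − x⟩ + g(u) + (1/(2λ))⟨∇²φ(x)(u − x), u − x⟩. Set d = y − x and assume d ≠ 0. Then for every ξ in the convex subdifferential ∂g(x): ⟨∇f(x) + ξ, d⟩ ≤ ⟨∇f(x), d⟩ + g(x + d) − g(x) ≤ −(1/λ)⟨∇²φ(x)d, d⟩ < 0. -/

import Mathlib

open Set Filter Topology
open scoped RealInnerProductSpace

/-- The convex subdifferential of `g + δ_S` at `x`: vectors `ξ` satisfying the
subgradient inequality against all points of `S`. With `S = Set.univ` this is the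
usual convex subdifferential `∂g(x)`. -/
def subdiffWithin {E : Type*} [NormedAddCommGroup E] [InnerProductSpace ℝ E]
    (g : E → ℝ) (S : Set E) (x : E) : Set E :=
  {ξ | ∀ y ∈ S, g x + ⟪ξ, y - x⟫ ≤ g y}

/-- search direction property. -/
theorem stmt0
    {E : Type*} [NormedAddCommGroup E] [InnerProductSpace ℝ E] [FiniteDimensional ℝ E]
    (C : Set E) (hCne : C.Nonempty) (hCopen : IsOpen C) (hCconv : Convex ℝ C)
    (φ f g : E → ℝ) (φ' f' : E → E) (Hφ : E → E →L[ℝ] E) (σ : ℝ) (hσ : 0 < σ)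
    (hφconv : ConvexOn ℝ Set.univ φ) (hφlsc : LowerSemicontinuous φ)
    (hφ'grad : ∀ z ∈ C, HasGradientAt φ (φ' z) z)
    (hφ'' : ∀ z ∈ C, HasFDerivAt φ' (Hφ z) z)
    (hφ''cont : ContinuousOn Hφ C)
    (hφstrong : ∀ z ∈ C, ∀ u : E, σ * ‖u‖ ^ 2 ≤ ⟪Hφ z u, u⟫)
    (hf'grad : ∀ z ∈ C, HasGradientAt f (f' z) z)
    (hf'cont : ContinuousOn f' C)
    (hgconv : ConvexOn ℝ Set.univ g) (hglsc : LowerSemicontinuous g)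
    (x : E) (hx : x ∈ C) (lam : ℝ) (hlam : 0 < lam)
    (y : E) (hy : y ∈ C)
    (hymin : IsMinOn (fun u => ⟪f' x, u - x⟫ + g u +
      (1 / (2 * lam)) * ⟪Hφ x (u - x), u - x⟫) (closure C) y)
    (d : E) (hd : d = y - x) (hdne : d ≠ 0)
    (ξ : E) (hξ : ξ ∈ subdiffWithin g Set.univ x) :
    ⟪f' x + ξ, d⟫ ≤ ⟪f' x, d⟫ + g (x + d) - g x ∧
    ⟪f' x, d⟫ + g (x + d) - g x ≤ -(1 / lam) * ⟪Hφ x d, d⟫ ∧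
    -(1 / lam) * ⟪Hφ x d, d⟫ < 0 := by

  have hxd : x + d = y := by rw [hd]; abel
  have hQpos : 0 < ⟪Hφ x d, d⟫ := by
    have hnd : 0 < ‖d‖ := norm_pos_iff.mpr hdne
    have := hφstrong x hx d
    nlinarith [this, mul_pos hσ (pow_pos hnd 2)]
  have hA : ∀ t : ℝ, t ∈ Set.Ioo (0:ℝ) 1 →
      ⟪f' x, d⟫ + g (x + d) - g x ≤ -((1 + t) * (1/(2*lam))) * ⟪Hφ x d, d⟫ := by
    intro t ht
    obtain ⟨ht0, ht1⟩ := ht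
    have hmem : x + t • d ∈ closure C := by
      have heq : x + t • d = (1 - t) • x + t • y := by rw [hd]; module
      rw [heq]
      exact hCconv.closure (subset_closure hx) (subset_closure hy)
        (by linarith) ht0.le (by ring)
    have hmin := isMinOn_iff.mp hymin _ hmem
    have hgc : g (x + t • d) ≤ (1 - t) * g x + t * g y := by
      have heq : x + t • d = (1 - t) • x + t • y := by rw [hd]; module
      have := hgconv.2 (Set.mem_univ x) (Set.mem_univ y)
        (by linarith : (0:ℝ) ≤ 1 - t) ht0.le (by ring)
      simpa [heq, smul_eq_mul] using this
    simp only [add_sub_cancel_left, ← hd] at hmin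
    rw [map_smul, real_inner_smul_right, real_inner_smul_left] at hmin
    rw [real_inner_smul_right] at hmin
    have h2 : (1 - t) * (⟪f' x, d⟫ + g y - g x) ≤
        (1/(2*lam)) * (t^2 - 1) * ⟪Hφ x d, d⟫ := by nlinarith [hmin, hgc]
    rw [hxd]
    have heq2 : (1/(2*lam)) * (t^2 - 1) * ⟪Hφ x d, d⟫ =
        (1 - t) * (-((1 + t) * (1/(2*lam))) * ⟪Hφ x d, d⟫) := by ring
    exact (mul_le_mul_iff_right₀ (by linarith : (0:ℝ) < 1 - t)).mp (h2.trans_eq heq2)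
  refine ⟨?_, ?_, ?_⟩
  · have := hξ y (Set.mem_univ y)
    rw [inner_add_left, hxd, ← hd] at *
    linarith [hξ y (Set.mem_univ y)]
  · have htend : Filter.Tendsto
        (fun t : ℝ => -((1 + t) * (1/(2*lam))) * ⟪Hφ x d, d⟫)
        (nhdsWithin (1:ℝ) (Set.Iio 1)) (nhds (-(1/lam) * ⟪Hφ x d, d⟫)) := by
      have hc : Continuous fun t : ℝ => -((1 + t) * (1/(2*lam))) * ⟪Hφ x d, d⟫ := by
        fun_prop
      have h : Filter.Tendsto (fun t : ℝ => -((1 + t) * (1/(2*lam))) * ⟪Hφ x d, d⟫)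
          (nhdsWithin (1:ℝ) (Set.Iio 1)) (nhds (-((1 + 1) * (1/(2*lam))) * ⟪Hφ x d, d⟫)) :=
        (hc.tendsto 1).mono_left nhdsWithin_le_nhds
      convert h using 2
      field_simp
      ring
    refine ge_of_tendsto htend ?_
    filter_upwards [Ioo_mem_nhdsLT_of_mem
      (show (1:ℝ) ∈ Set.Ioc (0:ℝ) 1 by norm_num)] with t ht
    exact hA t ht
  · have : 0 < (1/lam) * ⟪Hφ x d, d⟫ := mul_pos (by positivity) hQpos
    linarith
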